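/- Let M be an associative ℂ-algebra, E : M → ℂ a linear functional, and let W_n : M^n → Γ(M) be the multilinear maps determined by W() = 1 and the recursion W(a₁,…,a_{n+1}) = W(a₁,…,a_n)·X(a_{n+1}) − Σ_{i=1}^n E(a_i a_{n+1})·W(a₁,…,â_i,…,a_n), where â_i means a_i is omitted. Then for all a₁,…,a_n ∈ M: X(a₁)X(a₂)⋯X(a_n) = Σ_{π ∈ P_{1,2}(n)} (Π_{{i<j} ∈ Pair(π)} E(a_i a_j)) · W(a_{v₁},…,a_{v_m}), where {v₁},…,{v_m} are the singleton blocks of π with v₁ < … < v_m. -/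

import Mathlib

open Finset
open scoped Classical

noncomputable section

/-- A partition of `Fin n`, given by its (finite) set of blocks. -/
def IsPartition {n : ℕ} (P : Finset (Finset (Fin n))) : Prop :=
  (∀ B ∈ P, B.Nonempty) ∧ ∀ i : Fin n, ∃! B : Finset (Fin n), B ∈ P ∧ i ∈ B

/-- For `U = {i₁ < … < iₘ}`, the ordered product `a_{i₁} ⋯ a_{iₘ}`. -/
def aProd {M : Type*} [Ring M] {n : ℕ} (a : Fin n → M) (B : Finset (Fin n)) : M :=
  ((B.sort (· ≤ ·)).map a).prod

/-- The elements of `Fin n` forming singleton blocks of `P`, in increasing order. -/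
def singL {n : ℕ} (P : Finset (Finset (Fin n))) : List (Fin n) :=
  (Finset.univ.filter fun i : Fin n => ({i} : Finset (Fin n)) ∈ P).sort (· ≤ ·)

/- ### auxiliary machinery -/

def P12 (n : ℕ) : Finset (Finset (Finset (Fin n))) :=
  Finset.univ.filter (fun π => IsPartition π ∧ ∀ B ∈ π, B.card = 1 ∨ B.card = 2)

def emb (n : ℕ) : Finset (Fin n) ↪ Finset (Fin (n+1)) :=
  (Finset.mapEmbedding Fin.castSuccEmb).toEmbedding

def down {n : ℕ} (B : Finset (Fin (n+1))) : Finset (Fin n) :=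
  B.preimage Fin.castSucc (Fin.castSucc_injective n).injOn

def F0 {n : ℕ} (π : Finset (Finset (Fin n))) : Finset (Finset (Fin (n+1))) :=
  insert {Fin.last n} (π.map (emb n))

def F1 {n : ℕ} (π : Finset (Finset (Fin n))) (i : Fin n) : Finset (Finset (Fin (n+1))) :=
  insert {i.castSucc, Fin.last n} ((π.erase {i}).map (emb n))

lemma emb_apply {n : ℕ} (B : Finset (Fin n)) : emb n B = B.map Fin.castSuccEmb := rfl

lemma mem_emb_iff {n : ℕ} {π : Finset (Finset (Fin n))} {B' : Finset (Fin (n+1))} :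
    B' ∈ π.map (emb n) ↔ ∃ B ∈ π, emb n B = B' := by
  simp [Finset.mem_map]

lemma mem_emb_apply {n : ℕ} {B : Finset (Fin n)} {j : Fin (n+1)} :
    j ∈ emb n B ↔ ∃ i ∈ B, i.castSucc = j := by
  rw [emb_apply]
  simp only [Finset.mem_map]
  rfl

lemma last_not_mem_emb {n : ℕ} (B : Finset (Fin n)) : Fin.last n ∉ emb n B := by
  intro h
  obtain ⟨i, _, hi⟩ := mem_emb_apply.1 h
  exact absurd hi (Fin.castSucc_lt_last i).ne

lemma down_emb {n : ℕ} (B : Finset (Fin n)) : down (emb n B) = B := by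
  ext i
  simp only [down, Finset.mem_preimage, Set.mem_preimage, mem_emb_apply]
  constructor
  · rintro ⟨i', hi', h⟩
    rwa [Fin.castSucc_injective n h] at hi'
  · exact fun h => ⟨i, h, rfl⟩

lemma emb_down {n : ℕ} {B' : Finset (Fin (n+1))} (h : Fin.last n ∉ B') :
    emb n (down B') = B' := by
  ext j
  simp only [mem_emb_apply, down, Finset.mem_preimage]
  constructor
  · rintro ⟨i, hi, rfl⟩; exact hi
  · intro hj
    have hne : j ≠ Fin.last n := fun hc => h (hc ▸ hj)
    exact ⟨j.castPred hne, by rwa [Fin.castSucc_castPred], Fin.castSucc_castPred j hne⟩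

lemma card_emb {n : ℕ} (B : Finset (Fin n)) : (emb n B).card = B.card := by
  rw [emb_apply]; simp

lemma IsPartition.block_eq {n : ℕ} {π : Finset (Finset (Fin n))} (h : IsPartition π)
    {B C : Finset (Fin n)} {i : Fin n} (hB : B ∈ π) (hC : C ∈ π) (hiB : i ∈ B) (hiC : i ∈ C) :
    B = C := by
  obtain ⟨D, _, hD⟩ := h.2 i
  rw [hD B ⟨hB, hiB⟩, hD C ⟨hC, hiC⟩]

/-- uniqueness of sorted lists -/
lemma sort_eq_of {α : Type*} [LinearOrder α] (s : Finset α) (l : List α)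
    (h1 : l.Pairwise (· ≤ ·)) (h2 : l.Nodup) (h3 : ∀ x, x ∈ l ↔ x ∈ s) :
    s.sort (· ≤ ·) = l := by
  refine List.Perm.eq_of_pairwise' (Finset.pairwise_sort _ _) h1 ?_
  refine List.perm_of_nodup_nodup_toFinset_eq (Finset.sort_nodup _ _) h2 ?_
  ext x
  simp [Finset.mem_sort, h3]

lemma sort_map_castSucc {n : ℕ} (s : Finset (Fin n)) :
    (s.map Fin.castSuccEmb).sort (· ≤ ·) = (s.sort (· ≤ ·)).map Fin.castSucc := by
  refine sort_eq_of _ _ ?_ ?_ ?_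
  · exact List.Pairwise.map _ (fun _ _ hab => Fin.castSucc_le_castSucc_iff.2 hab)
      (Finset.pairwise_sort s _)
  · exact (Finset.sort_nodup s _).map (Fin.castSucc_injective n)
  · intro x
    simp only [List.mem_map, Finset.mem_sort, Finset.mem_map]
    constructor
    · rintro ⟨i, hi, rfl⟩; exact ⟨i, hi, rfl⟩
    · rintro ⟨i, hi, rfl⟩; exact ⟨i, hi, rfl⟩

lemma aProd_emb {M : Type*} [Ring M] {n : ℕ} (a : Fin (n+1) → M) (B : Finset (Fin n)) :
    aProd a (emb n B) = aProd (fun i => a i.castSucc) B := by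
  unfold aProd
  rw [emb_apply, sort_map_castSucc, List.map_map]
  rfl

lemma aProd_pair {M : Type*} [Ring M] {n : ℕ} (a : Fin n → M) {x y : Fin n} (h : x < y) :
    aProd a {x, y} = a x * a y := by
  unfold aProd
  have : ({x, y} : Finset (Fin n)).sort (· ≤ ·) = [x, y] := by
    refine sort_eq_of _ _ ?_ ?_ ?_
    · simp [h.le]
    · simp [h.ne]
    · intro z; simp
  rw [this]
  simp [mul_assoc]

lemma mem_P12 {n : ℕ} {π : Finset (Finset (Fin n))} :
    π ∈ P12 n ↔ IsPartition π ∧ ∀ B ∈ π, B.card = 1 ∨ B.card = 2 := by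
  simp [P12]

lemma singleton_last_not_mem_map {n : ℕ} (π : Finset (Finset (Fin n))) :
    ({Fin.last n} : Finset (Fin (n+1))) ∉ π.map (emb n) := by
  intro h
  obtain ⟨B, _, hB⟩ := mem_emb_iff.1 h
  exact last_not_mem_emb B (hB ▸ Finset.mem_singleton_self _)

lemma pair_not_mem_map {n : ℕ} (π : Finset (Finset (Fin n))) (i : Fin n) :
    ({i.castSucc, Fin.last n} : Finset (Fin (n+1))) ∉ π.map (emb n) := by
  intro h
  obtain ⟨B, _, hB⟩ := mem_emb_iff.1 h
  exact last_not_mem_emb B (hB ▸ by simp)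

/- ### the two set identities -/

lemma F0_mem {n : ℕ} {π : Finset (Finset (Fin n))} (h : π ∈ P12 n) : F0 π ∈ P12 (n+1) := by
  rw [mem_P12] at h ⊢
  obtain ⟨⟨hne, huniq⟩, hcard⟩ := h
  refine ⟨⟨?_, ?_⟩, ?_⟩
  · intro B' hB'
    rcases Finset.mem_insert.1 hB' with rfl | hB'
    · exact ⟨_, Finset.mem_singleton_self _⟩
    · obtain ⟨B, hB, rfl⟩ := mem_emb_iff.1 hB'
      obtain ⟨x, hx⟩ := hne B hB
      exact ⟨x.castSucc, mem_emb_apply.2 ⟨x, hx, rfl⟩⟩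
  · intro j
    induction j using Fin.lastCases with
    | last =>
      refine ⟨{Fin.last n}, ⟨Finset.mem_insert_self _ _, Finset.mem_singleton_self _⟩, ?_⟩
      rintro C ⟨hC, hlastC⟩
      rcases Finset.mem_insert.1 hC with rfl | hC
      · rfl
      · obtain ⟨B, hB, rfl⟩ := mem_emb_iff.1 hC
        exact absurd hlastC (last_not_mem_emb B)
    | cast i =>
      obtain ⟨B, ⟨hB, hiB⟩, hu⟩ := huniq i
      refine ⟨emb n B, ⟨Finset.mem_insert_of_mem (Finset.mem_map_of_mem _ hB),
        mem_emb_apply.2 ⟨i, hiB, rfl⟩⟩, ?_⟩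
      rintro C ⟨hC, hiC⟩
      rcases Finset.mem_insert.1 hC with rfl | hC
      · exact absurd (Finset.mem_singleton.1 hiC) (Fin.castSucc_lt_last i).ne
      · obtain ⟨B₂, hB₂, rfl⟩ := mem_emb_iff.1 hC
        obtain ⟨i₂, hi₂, hie⟩ := mem_emb_apply.1 hiC
        have h2 : i₂ = i := Fin.castSucc_injective n hie
        subst h2
        rw [hu B₂ ⟨hB₂, hi₂⟩]
  · intro B' hB'
    rcases Finset.mem_insert.1 hB' with rfl | hB'
    · left; simp
    · obtain ⟨B, hB, rfl⟩ := mem_emb_iff.1 hB'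
      rw [card_emb]; exact hcard B hB

lemma F1_mem {n : ℕ} {π : Finset (Finset (Fin n))} {i : Fin n} (h : π ∈ P12 n)
    (hi : ({i} : Finset (Fin n)) ∈ π) : F1 π i ∈ P12 (n+1) := by
  rw [mem_P12] at h ⊢
  obtain ⟨hpart, hcard⟩ := h
  have hnotmem : ∀ B ∈ π.erase {i}, i ∉ B := by
    intro B hB hiB
    exact (Finset.ne_of_mem_erase hB)
      (hpart.block_eq (Finset.mem_of_mem_erase hB) hi hiB (Finset.mem_singleton_self i))
  have hpair_mem : ({i.castSucc, Fin.last n} : Finset (Fin (n+1))) ∈ F1 π i :=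
    Finset.mem_insert_self _ _
  refine ⟨⟨?_, ?_⟩, ?_⟩
  · intro B' hB'
    rcases Finset.mem_insert.1 hB' with rfl | hB'
    · exact ⟨i.castSucc, by simp⟩
    · obtain ⟨B, hB, rfl⟩ := mem_emb_iff.1 hB'
      obtain ⟨x, hx⟩ := hpart.1 B (Finset.mem_of_mem_erase hB)
      exact ⟨x.castSucc, mem_emb_apply.2 ⟨x, hx, rfl⟩⟩
  · intro j
    induction j using Fin.lastCases with
    | last =>
      refine ⟨{i.castSucc, Fin.last n}, ⟨hpair_mem, by simp⟩, ?_⟩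
      rintro C ⟨hC, hlastC⟩
      rcases Finset.mem_insert.1 hC with rfl | hC
      · rfl
      · obtain ⟨B, hB, rfl⟩ := mem_emb_iff.1 hC
        exact absurd hlastC (last_not_mem_emb B)
    | cast i' =>
      by_cases hii : i' = i
      · subst hii
        refine ⟨{i'.castSucc, Fin.last n}, ⟨hpair_mem, by simp⟩, ?_⟩
        rintro C ⟨hC, hiC⟩
        rcases Finset.mem_insert.1 hC with rfl | hC
        · rfl
        · obtain ⟨B, hB, rfl⟩ := mem_emb_iff.1 hC
          obtain ⟨i₂, hi₂, hie⟩ := mem_emb_apply.1 hiC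
          have h2 : i₂ = i' := Fin.castSucc_injective n hie
          subst h2
          exact absurd hi₂ (hnotmem B hB)
      · obtain ⟨B, ⟨hB, hiB⟩, hu⟩ := hpart.2 i'
        have hBne : B ≠ {i} := by
          rintro rfl
          exact hii (Finset.mem_singleton.1 hiB)
        have hBe : B ∈ π.erase {i} := Finset.mem_erase.2 ⟨hBne, hB⟩
        refine ⟨emb n B, ⟨Finset.mem_insert_of_mem (Finset.mem_map_of_mem _ hBe),
          mem_emb_apply.2 ⟨i', hiB, rfl⟩⟩, ?_⟩
        rintro C ⟨hC, hiC⟩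
        rcases Finset.mem_insert.1 hC with rfl | hC
        · rcases Finset.mem_insert.1 hiC with he | he
          · exact absurd (Fin.castSucc_injective n he) hii
          · exact absurd (Finset.mem_singleton.1 he) (Fin.castSucc_lt_last i').ne
        · obtain ⟨B₂, hB₂, rfl⟩ := mem_emb_iff.1 hC
          obtain ⟨i₂, hi₂, hie⟩ := mem_emb_apply.1 hiC
          have h2 : i₂ = i' := Fin.castSucc_injective n hie
          subst h2
          rw [hu B₂ ⟨Finset.mem_of_mem_erase hB₂, hi₂⟩]
  · intro B' hB'
    rcases Finset.mem_insert.1 hB' with rfl | hB'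
    · right
      rw [Finset.card_insert_of_notMem (by simp [(Fin.castSucc_lt_last i).ne]),
        Finset.card_singleton]
    · obtain ⟨B, hB, rfl⟩ := mem_emb_iff.1 hB'
      rw [card_emb]; exact hcard B (Finset.mem_of_mem_erase hB)

lemma down_blocks {n : ℕ} {π' : Finset (Finset (Fin (n+1)))} (h : π' ∈ P12 (n+1))
    {B₀ : Finset (Fin (n+1))} (hB₀ : B₀ ∈ π') (hlast : Fin.last n ∈ B₀) :
    (∀ B ∈ π'.erase B₀, emb n (down B) = B)
    ∧ (∀ C ∈ (π'.erase B₀).image down, C.Nonempty)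
    ∧ (∀ C ∈ (π'.erase B₀).image down, C.card = 1 ∨ C.card = 2)
    ∧ (∀ C ∈ (π'.erase B₀).image down, ∀ i ∈ C, i.castSucc ∉ B₀)
    ∧ (∀ i : Fin n, i.castSucc ∉ B₀ →
        ∃! C, C ∈ (π'.erase B₀).image down ∧ i ∈ C) := by
  rw [mem_P12] at h
  obtain ⟨hpart, hcard⟩ := h
  have hnl : ∀ B ∈ π'.erase B₀, Fin.last n ∉ B := by
    intro B hB hl
    exact Finset.ne_of_mem_erase hB
      (hpart.block_eq (Finset.mem_of_mem_erase hB) hB₀ hl hlast)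
  have hed : ∀ B ∈ π'.erase B₀, emb n (down B) = B := fun B hB => emb_down (hnl B hB)
  have hmemdown : ∀ (B : Finset (Fin (n+1))) (i : Fin n), i ∈ down B ↔ i.castSucc ∈ B := by
    intro B i
    simp [down, Finset.mem_preimage]
  refine ⟨hed, ?_, ?_, ?_, ?_⟩
  · rintro C hC
    obtain ⟨B, hB, rfl⟩ := Finset.mem_image.1 hC
    obtain ⟨x, hx⟩ := hpart.1 B (Finset.mem_of_mem_erase hB)
    have hxl : x ≠ Fin.last n := fun hc => hnl B hB (hc ▸ hx)
    exact ⟨x.castPred hxl, (hmemdown B _).2 (by rwa [Fin.castSucc_castPred])⟩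
  · rintro C hC
    obtain ⟨B, hB, rfl⟩ := Finset.mem_image.1 hC
    have hc : (down B).card = B.card := by rw [← card_emb (down B), hed B hB]
    rw [hc]; exact hcard B (Finset.mem_of_mem_erase hB)
  · rintro C hC i hiC hi0
    obtain ⟨B, hB, rfl⟩ := Finset.mem_image.1 hC
    exact Finset.ne_of_mem_erase hB
      (hpart.block_eq (Finset.mem_of_mem_erase hB) hB₀ ((hmemdown B i).1 hiC) hi0)
  · intro i hi
    obtain ⟨B, ⟨hB, hiB⟩, hu⟩ := hpart.2 i.castSucc
    have hBne : B ≠ B₀ := fun hc => hi (hc ▸ hiB)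
    have hBe : B ∈ π'.erase B₀ := Finset.mem_erase.2 ⟨hBne, hB⟩
    refine ⟨down B, ⟨Finset.mem_image_of_mem _ hBe, (hmemdown B i).2 hiB⟩, ?_⟩
    rintro C ⟨hC, hiC⟩
    obtain ⟨B₂, hB₂, rfl⟩ := Finset.mem_image.1 hC
    rw [hu B₂ ⟨Finset.mem_of_mem_erase hB₂, (hmemdown B₂ i).1 hiC⟩]

lemma map_down {n : ℕ} {s : Finset (Finset (Fin (n+1)))}
    (hed : ∀ B ∈ s, emb n (down B) = B) : (s.image down).map (emb n) = s := by
  rw [Finset.map_eq_image, Finset.image_image]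
  calc s.image (emb n ∘ down) = s.image id := Finset.image_congr (fun B hB => hed B hB)
    _ = s := Finset.image_id

lemma S1_eq (n : ℕ) :
    (P12 (n+1)).filter (fun π' => ({Fin.last n} : Finset (Fin (n+1))) ∈ π')
      = (P12 n).image F0 := by
  ext π'
  simp only [Finset.mem_filter, Finset.mem_image]
  constructor
  · rintro ⟨hπ', hlast⟩
    obtain ⟨hed, hne, hcd, hnotin, hcover⟩ :=
      down_blocks hπ' hlast (Finset.mem_singleton_self _)
    refine ⟨(π'.erase {Fin.last n}).image down, ?_, ?_⟩
    · rw [mem_P12]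
      refine ⟨⟨hne, ?_⟩, hcd⟩
      intro i
      exact hcover i (by simp [(Fin.castSucc_lt_last i).ne])
    · rw [F0, map_down hed, Finset.insert_erase hlast]
  · rintro ⟨π, hπ, rfl⟩
    exact ⟨F0_mem hπ, Finset.mem_insert_self _ _⟩

lemma S2_eq (n : ℕ) :
    (P12 (n+1)).filter (fun π' => ({Fin.last n} : Finset (Fin (n+1))) ∉ π')
      = (((P12 n) ×ˢ (Finset.univ : Finset (Fin n))).filter
          (fun p => ({p.2} : Finset (Fin n)) ∈ p.1)).image (fun p => F1 p.1 p.2) := by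
  ext π'
  simp only [Finset.mem_filter, Finset.mem_image, Finset.mem_product]
  constructor
  · rintro ⟨hπ', hlast⟩
    obtain ⟨hpart, hcard⟩ := mem_P12.1 hπ'
    obtain ⟨B₀, ⟨hB₀, hlB₀⟩, -⟩ := hpart.2 (Fin.last n)
    have hc2 : B₀.card = 2 := by
      rcases hcard B₀ hB₀ with hc | hc
      · obtain ⟨x, rfl⟩ := Finset.card_eq_one.1 hc
        obtain rfl := Finset.mem_singleton.1 hlB₀
        exact absurd hB₀ hlast
      · exact hc
    obtain ⟨i₀, hB₀eq⟩ : ∃ i₀ : Fin n, B₀ = {i₀.castSucc, Fin.last n} := by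
      obtain ⟨u, v, huv, rfl⟩ := Finset.card_eq_two.1 hc2
      rcases Finset.mem_insert.1 hlB₀ with rfl | hv
      · refine ⟨v.castPred (Ne.symm huv), ?_⟩
        rw [Fin.castSucc_castPred]
        exact Finset.pair_comm _ _
      · obtain rfl := Finset.mem_singleton.1 hv
        exact ⟨u.castPred huv, by rw [Fin.castSucc_castPred]⟩
    have hcsin : i₀.castSucc ∈ B₀ := by rw [hB₀eq]; simp
    obtain ⟨hed, hne, hcd, hnotin, hcover⟩ := down_blocks hπ' hB₀ hlB₀
    have hsing : ({i₀} : Finset (Fin n)) ∉ (π'.erase B₀).image down := by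
      intro hc
      exact hnotin _ hc i₀ (Finset.mem_singleton_self _) hcsin
    refine ⟨(insert {i₀} ((π'.erase B₀).image down), i₀), ⟨⟨?_, Finset.mem_univ _⟩,
      Finset.mem_insert_self _ _⟩, ?_⟩
    · rw [mem_P12]
      refine ⟨⟨?_, ?_⟩, ?_⟩
      · intro C hC
        rcases Finset.mem_insert.1 hC with rfl | hC
        · exact ⟨i₀, Finset.mem_singleton_self _⟩
        · exact hne C hC
      · intro i
        by_cases hii : i = i₀
        · subst hii
          refine ⟨{i}, ⟨Finset.mem_insert_self _ _, Finset.mem_singleton_self _⟩, ?_⟩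
          rintro C ⟨hC, hiC⟩
          rcases Finset.mem_insert.1 hC with rfl | hC
          · rfl
          · exact absurd hcsin (hnotin C hC i hiC)
        · have hcs : i.castSucc ∉ B₀ := by
            rw [hB₀eq]
            intro hc
            rcases Finset.mem_insert.1 hc with he | he
            · exact hii (Fin.castSucc_injective n he)
            · exact (Fin.castSucc_lt_last i).ne (Finset.mem_singleton.1 he)
          obtain ⟨C, ⟨hC, hiC⟩, hu⟩ := hcover i hcs
          refine ⟨C, ⟨Finset.mem_insert_of_mem hC, hiC⟩, ?_⟩
          rintro D ⟨hD, hiD⟩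
          rcases Finset.mem_insert.1 hD with rfl | hD
          · exact absurd (Finset.mem_singleton.1 hiD) hii
          · exact hu D ⟨hD, hiD⟩
      · intro C hC
        rcases Finset.mem_insert.1 hC with rfl | hC
        · left; simp
        · exact hcd C hC
    · show F1 _ _ = π'
      rw [F1, Finset.erase_insert hsing, map_down hed, ← hB₀eq, Finset.insert_erase hB₀]
  · rintro ⟨p, ⟨⟨hp1, -⟩, hp2⟩, rfl⟩
    refine ⟨F1_mem hp1 hp2, ?_⟩
    intro hc
    rcases Finset.mem_insert.1 hc with he | he
    · have : p.2.castSucc ∈ ({Fin.last n} : Finset (Fin (n+1))) := by rw [he]; simp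
      exact (Fin.castSucc_lt_last p.2).ne (Finset.mem_singleton.1 this)
    · exact singleton_last_not_mem_map _ he

lemma F0_inj {n : ℕ} : ∀ π₁ ∈ P12 n, ∀ π₂ ∈ P12 n, F0 π₁ = F0 π₂ → π₁ = π₂ := by
  intro π₁ _ π₂ _ h
  have e1 : (F0 π₁).erase {Fin.last n} = π₁.map (emb n) :=
    Finset.erase_insert (singleton_last_not_mem_map π₁)
  have e2 : (F0 π₂).erase {Fin.last n} = π₂.map (emb n) :=
    Finset.erase_insert (singleton_last_not_mem_map π₂)
  exact Finset.map_injective (emb n) (by rw [← e1, ← e2, h])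

lemma F1_inj (n : ℕ) :
    ∀ p₁ ∈ (((P12 n) ×ˢ (Finset.univ : Finset (Fin n))).filter
        (fun p => ({p.2} : Finset (Fin n)) ∈ p.1)),
    ∀ p₂ ∈ (((P12 n) ×ˢ (Finset.univ : Finset (Fin n))).filter
        (fun p => ({p.2} : Finset (Fin n)) ∈ p.1)),
      F1 p₁.1 p₁.2 = F1 p₂.1 p₂.2 → p₁ = p₂ := by
  intro p₁ hp₁ p₂ hp₂ h
  simp only [Finset.mem_filter, Finset.mem_product] at hp₁ hp₂
  obtain ⟨⟨h1, -⟩, hi1⟩ := hp₁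
  obtain ⟨⟨h2, -⟩, hi2⟩ := hp₂
  have hie : p₁.2 = p₂.2 := by
    have hm : ({p₁.2.castSucc, Fin.last n} : Finset (Fin (n+1))) ∈ F1 p₂.1 p₂.2 := by
      rw [← h]; exact Finset.mem_insert_self _ _
    rcases Finset.mem_insert.1 hm with he | hm
    · have hmm : p₁.2.castSucc ∈ ({p₂.2.castSucc, Fin.last n} : Finset (Fin (n+1))) := by
        rw [← he]; simp
      rcases Finset.mem_insert.1 hmm with he2 | he2
      · exact Fin.castSucc_injective n he2
      · exact absurd (Finset.mem_singleton.1 he2) (Fin.castSucc_lt_last _).ne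
    · exact absurd hm (pair_not_mem_map _ _)
  have hπe : p₁.1 = p₂.1 := by
    have e1 : (F1 p₁.1 p₁.2).erase {p₁.2.castSucc, Fin.last n}
        = (p₁.1.erase {p₁.2}).map (emb n) :=
      Finset.erase_insert (pair_not_mem_map _ _)
    have e2 : (F1 p₂.1 p₂.2).erase {p₂.2.castSucc, Fin.last n}
        = (p₂.1.erase {p₂.2}).map (emb n) :=
      Finset.erase_insert (pair_not_mem_map _ _)
    have he : p₁.1.erase {p₁.2} = p₂.1.erase {p₂.2} :=
      Finset.map_injective (emb n) (by rw [← e1, ← e2, h, hie])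
    have h3 := congrArg (insert ({p₁.2} : Finset (Fin n))) he
    rwa [Finset.insert_erase hi1, hie, Finset.insert_erase hi2] at h3
  exact Prod.ext hπe hie

lemma emb_singleton {n : ℕ} (i : Fin n) :
    emb n {i} = ({i.castSucc} : Finset (Fin (n+1))) := by
  rw [emb_apply, Finset.map_singleton]; rfl

lemma down_singleton {n : ℕ} (i : Fin n) :
    down ({i.castSucc} : Finset (Fin (n+1))) = {i} := by
  ext k
  simp [down, Finset.mem_preimage, (Fin.castSucc_injective n).eq_iff]

lemma singleton_mem_map_iff {n : ℕ} {π : Finset (Finset (Fin n))} {j : Fin (n+1)} :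
    ({j} : Finset (Fin (n+1))) ∈ π.map (emb n)
      ↔ ∃ i : Fin n, j = i.castSucc ∧ ({i} : Finset (Fin n)) ∈ π := by
  constructor
  · intro h
    obtain ⟨B, hB, hBe⟩ := mem_emb_iff.1 h
    have hj : j ∈ emb n B := by rw [hBe]; exact Finset.mem_singleton_self j
    obtain ⟨i, hiB, rfl⟩ := mem_emb_apply.1 hj
    have hBi : B = {i} := by rw [← down_emb B, hBe, down_singleton]
    exact ⟨i, rfl, hBi ▸ hB⟩
  · rintro ⟨i, rfl, hi⟩
    exact mem_emb_iff.2 ⟨{i}, hi, emb_singleton i⟩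

/- ### singL identities -/

lemma singL_F0 {n : ℕ} (π : Finset (Finset (Fin n))) :
    singL (F0 π) = ((singL π).map Fin.castSucc) ++ [Fin.last n] := by
  unfold singL
  refine sort_eq_of _ _ ?_ ?_ ?_
  · rw [List.pairwise_append]
    refine ⟨List.Pairwise.map _ (fun _ _ h => Fin.castSucc_le_castSucc_iff.2 h)
      (Finset.pairwise_sort _ _), List.pairwise_singleton _ _, ?_⟩
    intro x hx b hb
    rw [List.mem_singleton.1 hb]
    exact Fin.le_last x
  · rw [List.nodup_append]
    refine ⟨(Finset.sort_nodup _ _).map (Fin.castSucc_injective n),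
      List.nodup_singleton _, ?_⟩
    intro x hx y hx2
    obtain ⟨i, _, rfl⟩ := List.mem_map.1 hx
    rw [List.mem_singleton.1 hx2]; exact (Fin.castSucc_lt_last i).ne
  · intro x
    simp only [List.mem_append, List.mem_map, List.mem_singleton, Finset.mem_sort,
      Finset.mem_filter, Finset.mem_univ, true_and, F0, Finset.mem_insert,
      Finset.singleton_inj]
    rw [singleton_mem_map_iff]
    constructor
    · rintro (⟨i, hi, rfl⟩ | rfl)
      · exact Or.inr ⟨i, rfl, hi⟩
      · exact Or.inl rfl
    · rintro (rfl | ⟨i, rfl, hi⟩)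
      · exact Or.inr rfl
      · exact Or.inl ⟨i, hi, rfl⟩

lemma singL_F1 {n : ℕ} {π : Finset (Finset (Fin n))} {i : Fin n}
    (hi : ({i} : Finset (Fin n)) ∈ π) :
    singL (F1 π i) = ((singL π).erase i).map Fin.castSucc := by
  unfold singL
  have hnd : ((Finset.univ.filter fun j : Fin n => ({j} : Finset (Fin n)) ∈ π).sort
      (· ≤ ·)).Nodup := Finset.sort_nodup _ _
  refine sort_eq_of _ _ ?_ ?_ ?_
  · exact List.Pairwise.map _ (fun _ _ h => Fin.castSucc_le_castSucc_iff.2 h)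
      ((Finset.pairwise_sort _ _).sublist List.erase_sublist)
  · exact (hnd.sublist List.erase_sublist).map (Fin.castSucc_injective n)
  · intro x
    simp only [List.mem_map, hnd.mem_erase_iff, Finset.mem_sort, Finset.mem_filter,
      Finset.mem_univ, true_and, F1, Finset.mem_insert]
    rw [singleton_mem_map_iff]
    constructor
    · rintro ⟨i', ⟨hne, hi'⟩, rfl⟩
      right
      exact ⟨i', rfl, Finset.mem_erase.2 ⟨by simpa using hne, hi'⟩⟩
    · rintro (he | ⟨i', rfl, hi'⟩)
      · exfalso
        have : i.castSucc ∈ ({x} : Finset (Fin (n+1))) := by rw [he]; simp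
        have hx : x = i.castSucc := (Finset.mem_singleton.1 this).symm
        have : Fin.last n ∈ ({x} : Finset (Fin (n+1))) := by rw [he]; simp
        rw [hx] at this
        exact (Fin.castSucc_lt_last i).ne (Finset.mem_singleton.1 this).symm
      · obtain ⟨hne, hmem⟩ := Finset.mem_erase.1 hi'
        exact ⟨i', ⟨by simpa using hne, hmem⟩, rfl⟩

lemma filter_card_map {n : ℕ} (X : Finset (Finset (Fin n))) :
    (X.map (emb n)).filter (fun B => B.card = 2)
      = (X.filter (fun B => B.card = 2)).map (emb n) := by
  ext B'
  simp only [Finset.mem_filter, Finset.mem_map]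
  constructor
  · rintro ⟨⟨B, hB, rfl⟩, hc⟩
    exact ⟨B, ⟨hB, by rwa [card_emb] at hc⟩, rfl⟩
  · rintro ⟨B, ⟨hB, hc⟩, rfl⟩
    exact ⟨⟨B, hB, rfl⟩, by rwa [card_emb]⟩

/- ### weight identities -/

lemma weight_F0 {M : Type*} [Ring M] [Algebra ℂ M] (E : M →ₗ[ℂ] ℂ) {n : ℕ}
    (a : Fin (n+1) → M) (π : Finset (Finset (Fin n))) :
    (∏ B ∈ (F0 π).filter (fun B => B.card = 2), E (aProd a B))
      = ∏ B ∈ π.filter (fun B => B.card = 2), E (aProd (fun i => a i.castSucc) B) := by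
  have hset : (F0 π).filter (fun B => B.card = 2)
      = (π.filter (fun B => B.card = 2)).map (emb n) := by
    rw [F0, Finset.filter_insert]
    rw [if_neg (by simp), filter_card_map]
  rw [hset, Finset.prod_map]
  exact Finset.prod_congr rfl (fun B _ => by rw [aProd_emb])

lemma weight_F1 {M : Type*} [Ring M] [Algebra ℂ M] (E : M →ₗ[ℂ] ℂ) {n : ℕ}
    (a : Fin (n+1) → M) {π : Finset (Finset (Fin n))} {i : Fin n}
    (hπ : π ∈ P12 n) (hi : ({i} : Finset (Fin n)) ∈ π) :
    (∏ B ∈ (F1 π i).filter (fun B => B.card = 2), E (aProd a B))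
      = E (a i.castSucc * a (Fin.last n))
          * ∏ B ∈ π.filter (fun B => B.card = 2), E (aProd (fun j => a j.castSucc) B) := by
  have hpc : ({i.castSucc, Fin.last n} : Finset (Fin (n+1))).card = 2 := by
    rw [Finset.card_insert_of_notMem (by simp [(Fin.castSucc_lt_last i).ne]),
      Finset.card_singleton]
  have herase : (π.erase {i}).filter (fun B => B.card = 2)
      = π.filter (fun B => B.card = 2) := by
    rw [Finset.filter_erase]
    rw [Finset.erase_eq_of_notMem]
    simp only [Finset.mem_filter]
    rintro ⟨-, hc⟩
    simp at hc
  have hset : (F1 π i).filter (fun B => B.card = 2)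
      = insert {i.castSucc, Fin.last n} ((π.filter (fun B => B.card = 2)).map (emb n)) := by
    rw [F1, Finset.filter_insert, if_pos hpc, filter_card_map, herase]
  rw [hset, Finset.prod_insert (pair_not_mem_map _ _), Finset.prod_map,
    aProd_pair a (Fin.castSucc_lt_last i)]
  congr 1
  exact Finset.prod_congr rfl (fun B _ => by rw [aProd_emb])

/- ### W machinery -/

section Wsec
variable {M : Type*} [Ring M] [Algebra ℂ M] (E : M →ₗ[ℂ] ℂ)
variable (W : (m : ℕ) → (Fin m → M) → TensorAlgebra ℂ M)

def Wd : (m : ℕ) → (Fin m → M) → Fin m → TensorAlgebra ℂ M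
  | 0, _, i => i.elim0
  | (m+1), b, i => W m (i.removeNth b)

lemma Wcongr {m₁ m₂ : ℕ} (h : m₁ = m₂) {f₁ : Fin m₁ → M} {f₂ : Fin m₂ → M}
    (hf : ∀ j : Fin m₁, f₁ j = f₂ (Fin.cast h j)) : W m₁ f₁ = W m₂ f₂ := by
  subst h
  congr 1
  exact funext hf

lemma key (hW1 : ∀ a : Fin 1 → M, W 1 a = W 0 (Fin.init a) * TensorAlgebra.ι ℂ (a 0))
    (hWrec : ∀ (m : ℕ) (a : Fin (m + 2) → M),
      W (m + 2) a =
        W (m + 1) (Fin.init a) * TensorAlgebra.ι ℂ (a (Fin.last (m + 1)))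
          - ∑ i : Fin (m + 1),
              E (a i.castSucc * a (Fin.last (m + 1))) • W m (i.removeNth (Fin.init a)))
    (m : ℕ) (b : Fin m → M) (c : M) :
    W m b * TensorAlgebra.ι ℂ c
      = W (m+1) (Fin.snoc b c) + ∑ i : Fin m, E (b i * c) • Wd W m b i := by
  cases m with
  | zero =>
    have h := hW1 (Fin.snoc b c)
    rw [Fin.init_snoc] at h
    have h0 : (Fin.snoc b c : Fin 1 → M) 0 = c := by
      show (Fin.snoc b c : Fin 1 → M) (Fin.last 0) = c
      rw [Fin.snoc_last]
    rw [h0] at h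
    simp [h]
  | succ m' =>
    have h := hWrec m' (Fin.snoc b c)
    rw [Fin.init_snoc, Fin.snoc_last] at h
    have hs : ∀ i : Fin (m'+1), (Fin.snoc b c : Fin (m'+2) → M) i.castSucc = b i :=
      fun i => by simp
    have h2 : ∀ i : Fin (m'+1), E ((Fin.snoc b c : Fin (m'+2) → M) i.castSucc * c) • W m' (i.removeNth b)
        = E (b i * c) • Wd W (m'+1) b i := by
      intro i; rw [hs i]; rfl
    rw [Finset.sum_congr rfl (fun i _ => h2 i)] at h
    rw [eq_sub_iff_add_eq] at h
    exact h.symm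

lemma Wd_match {n : ℕ} (b : Fin n → M) (l : List (Fin n)) (hnd : l.Nodup) (k : Fin l.length) :
    Wd W l.length (fun j => b (l.get j)) k
      = W (l.erase (l.get k)).length (fun j => b ((l.erase (l.get k)).get j)) := by
  cases l with
  | nil => exact k.elim0
  | cons x t =>
    have hmem : (x :: t).get k ∈ (x :: t) := (x :: t).get_mem k
    have hlen : t.length = ((x :: t).erase ((x :: t).get k)).length := by
      rw [List.length_erase_of_mem hmem]; rfl
    show W t.length (k.removeNth fun j => b ((x :: t).get j)) = _
    refine Wcongr W hlen ?_
    intro j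
    show b ((x :: t).get (k.succAbove j))
      = b (((x :: t).erase ((x :: t).get k)).get (Fin.cast hlen j))
    congr 1
    have he : (x :: t).erase ((x :: t).get k) = (x :: t).eraseIdx k :=
      List.Nodup.erase_get hnd k
    have hcoe : ((k.succAbove j) : ℕ) = if (j:ℕ) < (k:ℕ) then (j:ℕ) else (j:ℕ)+1 := by
      by_cases h : (j:ℕ) < (k:ℕ)
      · rw [Fin.succAbove_of_castSucc_lt _ _ (by simpa [Fin.lt_def] using h)]
        simp [h]
      · rw [Fin.succAbove_of_le_castSucc _ _ (by simpa [Fin.le_def] using not_lt.1 h)]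
        simp [h]
    have hg : ∀ (i1 i2 : ℕ) (h1 : i1 < (x :: t).length) (h2 : i2 < (x :: t).length), i1 = i2 →
        (x :: t)[i1] = (x :: t)[i2] := by
      intro i1 i2 h1 h2 h; subst h; rfl
    simp only [List.get_eq_getElem] at he ⊢
    simp only [he]
    rw [List.getElem_eraseIdx]
    split_ifs with h'
    · apply hg; rw [hcoe, if_pos (by simpa using h')]; simp
    all_goals apply hg; rw [hcoe, if_neg (by simpa using h')]; simp

lemma WL {n : ℕ} (a : Fin n → M) (l₁ l₂ : List (Fin n)) (h : l₁ = l₂) :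
    W l₁.length (fun j => a (l₁.get j)) = W l₂.length (fun j => a (l₂.get j)) := by
  subst h; rfl

end Wsec

/- ### sum over sorted list -/

lemma sum_sort {α β : Type*} [LinearOrder α] [AddCommMonoid β] (s : Finset α) (h : α → β) :
    (∑ i ∈ s, h i) = ∑ k : Fin ((s.sort (· ≤ ·)).length), h ((s.sort (· ≤ ·)).get k) := by
  rw [← List.sum_ofFn]
  have : (List.ofFn fun k => h ((s.sort (· ≤ ·)).get k))
      = ((s.sort (· ≤ ·)).map h) := by
    rw [← List.ofFn_get (s.sort (· ≤ ·)), List.map_ofFn, List.ofFn_get]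
    rfl
  rw [this, ← Finset.sum_map_toList]
  exact (((Finset.sort_perm_toList s (· ≤ ·)).map h).sum_eq).symm

theorem stmt7 {M : Type*} [Ring M] [Algebra ℂ M] (E : M →ₗ[ℂ] ℂ)
    (W : (m : ℕ) → (Fin m → M) → TensorAlgebra ℂ M)
    (hW0 : ∀ a : Fin 0 → M, W 0 a = 1)
    (hW1 : ∀ a : Fin 1 → M, W 1 a = W 0 (Fin.init a) * TensorAlgebra.ι ℂ (a 0))
    (hWrec : ∀ (m : ℕ) (a : Fin (m + 2) → M),
      W (m + 2) a =
        W (m + 1) (Fin.init a) * TensorAlgebra.ι ℂ (a (Fin.last (m + 1)))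
          - ∑ i : Fin (m + 1),
              E (a i.castSucc * a (Fin.last (m + 1))) • W m (i.removeNth (Fin.init a)))
    (n : ℕ) (a : Fin n → M) :
    (List.ofFn fun i => TensorAlgebra.ι ℂ (a i)).prod
      = ∑ π ∈ Finset.univ.filter (fun π : Finset (Finset (Fin n)) =>
            IsPartition π ∧ ∀ B ∈ π, B.card = 1 ∨ B.card = 2),
          (∏ B ∈ π.filter fun B => B.card = 2, E (aProd a B)) •
            W (singL π).length (fun j => a ((singL π).get j)) := by
  induction n with
  | zero =>
    have hS : (Finset.univ.filter (fun π : Finset (Finset (Fin 0)) =>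
        IsPartition π ∧ ∀ B ∈ π, B.card = 1 ∨ B.card = 2)) = {∅} := by
      ext π
      simp only [Finset.mem_filter, Finset.mem_univ, true_and, Finset.mem_singleton]
      constructor
      · rintro ⟨⟨hne, -⟩, -⟩
        rw [Finset.eq_empty_iff_forall_notMem]
        intro B hB
        obtain ⟨x, -⟩ := hne B hB
        exact x.elim0
      · rintro rfl
        exact ⟨⟨fun B hB => absurd hB (Finset.notMem_empty B),
          fun i => i.elim0⟩, fun B hB => absurd hB (Finset.notMem_empty B)⟩
    rw [hS, Finset.sum_singleton]
    have hsing : singL (∅ : Finset (Finset (Fin 0))) = [] := by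
      unfold singL
      have : (Finset.univ.filter fun i : Fin 0 =>
          ({i} : Finset (Fin 0)) ∈ (∅ : Finset (Finset (Fin 0)))) = ∅ := by
        simp
      rw [this, Finset.sort_empty]
    rw [WL W a _ _ hsing]
    simp [hW0]
  | succ n IH =>
    set c := a (Fin.last n) with hc
    set b : Fin n → M := fun i => a i.castSucc with hb
    have IH' : (List.ofFn fun i : Fin n => TensorAlgebra.ι ℂ (b i)).prod
        = ∑ π ∈ P12 n,
            (∏ B ∈ π.filter fun B => B.card = 2, E (aProd b B)) •
              W (singL π).length (fun j => b ((singL π).get j)) := IH b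
    show _ = ∑ π ∈ P12 (n+1),
        (∏ B ∈ π.filter fun B => B.card = 2, E (aProd a B)) •
          W (singL π).length (fun j => a ((singL π).get j))
    have hLHS : (List.ofFn fun i : Fin (n+1) => TensorAlgebra.ι ℂ (a i)).prod
        = (List.ofFn fun i : Fin n => TensorAlgebra.ι ℂ (b i)).prod
            * TensorAlgebra.ι ℂ c := by
      rw [List.ofFn_succ' fun i : Fin (n+1) => TensorAlgebra.ι ℂ (a i), List.prod_concat]
    rw [hLHS, IH', Finset.sum_mul]
    have hterm : ∀ π ∈ P12 n,
        ((∏ B ∈ π.filter fun B => B.card = 2, E (aProd b B)) •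
            W (singL π).length (fun j => b ((singL π).get j))) * TensorAlgebra.ι ℂ c
        = (∏ B ∈ π.filter fun B => B.card = 2, E (aProd b B)) •
            W ((singL π).length + 1) (Fin.snoc (fun j => b ((singL π).get j)) c)
          + ∑ k : Fin (singL π).length,
              ((∏ B ∈ π.filter fun B => B.card = 2, E (aProd b B))
                  * E (b ((singL π).get k) * c)) •
                Wd W (singL π).length (fun j => b ((singL π).get j)) k := by
      intro π _
      rw [smul_mul_assoc, key E W hW1 hWrec, smul_add, Finset.smul_sum]
      congr 1
      exact Finset.sum_congr rfl fun k _ => smul_smul _ _ _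
    rw [Finset.sum_congr rfl hterm, Finset.sum_add_distrib]
    rw [← Finset.sum_filter_add_sum_filter_not (P12 (n+1))
      (fun π' => ({Fin.last n} : Finset (Fin (n+1))) ∈ π'), S1_eq, S2_eq,
      Finset.sum_image F0_inj, Finset.sum_image (F1_inj n)]
    congr 1
    · -- singleton-last part
      refine Finset.sum_congr rfl fun π hπ => ?_
      rw [weight_F0 E a π]
      congr 1
      rw [WL W a _ _ (singL_F0 π)]
      have hlen : (singL π).length + 1
          = (((singL π).map Fin.castSucc) ++ [Fin.last n]).length := by
        simp
      refine (Wcongr W hlen ?_).symm.symm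
      intro j
      induction j using Fin.lastCases with
      | last =>
        rw [Fin.snoc_last]
        have hg : ((((singL π).map Fin.castSucc) ++ [Fin.last n]).get
            (Fin.cast hlen (Fin.last (singL π).length))) = Fin.last n := by
          rw [List.get_eq_getElem, List.getElem_append_right (by simp)]
          simp
        rw [hg]
      | cast k =>
        rw [Fin.snoc_castSucc]
        have hg : ((((singL π).map Fin.castSucc) ++ [Fin.last n]).get
            (Fin.cast hlen k.castSucc)) = ((singL π).get k).castSucc := by
          rw [List.get_eq_getElem, List.getElem_append_left (by simp)]
          simp
        rw [hg]
    · -- pair part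
      rw [Finset.sum_filter, Finset.sum_product]
      refine Finset.sum_congr rfl fun π hπ => ?_
      rw [← Finset.sum_filter]
      rw [sum_sort (Finset.univ.filter fun i : Fin n => ({i} : Finset (Fin n)) ∈ π)
        (fun i => (∏ B ∈ (F1 π i).filter fun B => B.card = 2, E (aProd a B)) •
          W (singL (F1 π i)).length (fun j => a ((singL (F1 π i)).get j)))]
      refine Finset.sum_congr rfl fun k _ => ?_
      have hknd : (singL π).Nodup := Finset.sort_nodup _ _
      have hmem : (singL π).get k ∈ singL π := (singL π).get_mem k
      have hi : ({(singL π).get k} : Finset (Fin n)) ∈ π :=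
        (Finset.mem_filter.1 ((Finset.mem_sort _).1 hmem)).2
      show _ = (∏ B ∈ (F1 π ((singL π).get k)).filter fun B => B.card = 2, E (aProd a B)) •
        W (singL (F1 π ((singL π).get k))).length
          (fun j => a ((singL (F1 π ((singL π).get k))).get j))
      rw [weight_F1 E a hπ hi, WL W a _ _ (singL_F1 hi), Wd_match W b (singL π) hknd k,
        mul_comm]
      congr 1
      have hlen2 : ((singL π).erase ((singL π).get k)).length
          = (((singL π).erase ((singL π).get k)).map Fin.castSucc).length :=
        (List.length_map _).symm
      refine Wcongr W hlen2 ?_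
      intro j
      show b (((singL π).erase ((singL π).get k)).get j)
        = a ((((singL π).erase ((singL π).get k)).map Fin.castSucc).get (Fin.cast hlen2 j))
      simp only [List.get_eq_getElem, List.getElem_map, Fin.coe_cast]
      rfl
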